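/- With Φ as above (strictly convex, Φ(0)=1, Φ'(0)=0, Φ'(t) → λ₀ < ∞), the function t ↦ Φ(t)/t on (0,∞) attains a unique minimum at some θ > 0, characterized by Φ'(θ) = Φ(θ)/θ; moreover for every λ with ρ := Φ(θ)/θ < λ < λ₀, the equation λ·t = Φ(t) has exactly two positive solutions, one in (0,θ) and one in (θ,∞), while for λ ≥ λ₀ it has exactly one positive solution. -/

import Mathlib

open Real

lemma aux_one_le (c t : ℝ) (hc : 0 ≤ c) : (1:ℝ) ≤ 1 + c * t^2 := by nlinarith [sq_nonneg t]
lemma aux_sqrt_pos (c t : ℝ) (hc : 0 ≤ c) : 0 < Real.sqrt (1 + c * t^2) := by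
  have := aux_one_le c t hc; positivity

noncomputable def auxF (C D t : ℝ) : ℝ := D/2 * (Real.sqrt (1 + C*t^2) - 1)
noncomputable def auxF' (C D t : ℝ) : ℝ := D/2 * (C*t / Real.sqrt (1 + C*t^2))
noncomputable def auxG (C D t : ℝ) : ℝ := D/2 * (1 - 1/Real.sqrt (1 + C*t^2))

lemma auxF_hasDeriv (C D t : ℝ) (hC : 0 < C) : HasDerivAt (auxF C D) (auxF' C D t) t := by
  have hu : (0:ℝ) < 1 + C*t^2 := lt_of_lt_of_le one_pos (aux_one_le C t hC.le)
  have h1 : HasDerivAt (fun s : ℝ => 1 + C*s^2) (C*(2*t)) t := by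
    simpa using ((hasDerivAt_pow 2 t).const_mul C).const_add 1
  have h2 : HasDerivAt Real.sqrt (1/(2*Real.sqrt (1+C*t^2))) (1+C*t^2) :=
    Real.hasDerivAt_sqrt (ne_of_gt hu)
  have h3 := (h2.comp t h1).sub_const 1 |>.const_mul (D/2)
  have hfeq : auxF C D = fun s => D/2 * ((Real.sqrt ∘ fun s : ℝ => 1 + C*s^2) s - 1) := by
    ext s; simp [auxF, Function.comp]
  rw [hfeq]
  refine h3.congr_deriv ?_
  have hs := aux_sqrt_pos C t hC.le
  rw [auxF']
  field_simp

lemma aux_sqrt_ge_one (c t : ℝ) (hc : 0 ≤ c) : 1 ≤ Real.sqrt (1 + c * t^2) :=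
  Real.one_le_sqrt.mpr (aux_one_le c t hc)

lemma aux_sqrt_le (c t : ℝ) (hc : 0 ≤ c) :
    Real.sqrt (1 + c * t^2) ≤ 1 + Real.sqrt c * |t| := by
  rw [Real.sqrt_le_left (by positivity)]
  have h1 : Real.sqrt c ^ 2 = c := Real.sq_sqrt hc
  have h2 : |t|^2 = t^2 := sq_abs t
  nlinarith [Real.sqrt_nonneg c, abs_nonneg t]

lemma auxF'_bound (C D t : ℝ) (hC : 0 ≤ C) (hD : 0 ≤ D) :
    |auxF' C D t| ≤ D/2 * Real.sqrt C := by
  have key : |C * t / Real.sqrt (1 + C * t^2)| ≤ Real.sqrt C := by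
    rw [abs_div, abs_of_pos (aux_sqrt_pos C t hC), div_le_iff₀ (aux_sqrt_pos C t hC)]
    have h2 : (Real.sqrt C * Real.sqrt (1+C*t^2))^2 = C * (1+C*t^2) := by
      rw [mul_pow, Real.sq_sqrt hC, Real.sq_sqrt (by nlinarith [sq_nonneg t] : (0:ℝ) ≤ 1+C*t^2)]
    have h3 : |C*t| ^2 ≤ (Real.sqrt C * Real.sqrt (1+C*t^2))^2 := by
      rw [sq_abs, h2]; nlinarith [sq_nonneg t]
    nlinarith [abs_nonneg (C*t), mul_nonneg (Real.sqrt_nonneg C) (Real.sqrt_nonneg (1+C*t^2))]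
  rw [auxF', abs_mul, abs_of_nonneg (by positivity : (0:ℝ) ≤ D/2)]
  exact mul_le_mul_of_nonneg_left key (by positivity)

lemma auxF_nonneg (C D t : ℝ) (hC : 0 ≤ C) (hD : 0 ≤ D) : 0 ≤ auxF C D t := by
  have h := aux_sqrt_ge_one C t hC
  exact mul_nonneg (by positivity) (by linarith)

lemma auxF_zero (C D : ℝ) : auxF C D 0 = 0 := by simp [auxF]

lemma auxF_le (C D t : ℝ) (hC : 0 ≤ C) (hD : 0 ≤ D) (ht : 0 ≤ t) :
    auxF C D t ≤ D/2 * Real.sqrt C * t := by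
  have h := aux_sqrt_le C t hC
  rw [abs_of_nonneg ht] at h
  rw [auxF]
  nlinarith [Real.sqrt_nonneg C]

lemma auxG_eq (C D t : ℝ) (hC : 0 ≤ C) :
    t * auxF' C D t - auxF C D t = auxG C D t := by
  have hs := aux_sqrt_pos C t hC
  have hsq : Real.sqrt (1+C*t^2) ^2 = 1 + C*t^2 :=
    Real.sq_sqrt (by nlinarith [sq_nonneg t])
  have key : C*t^2/Real.sqrt (1+C*t^2) - (Real.sqrt (1+C*t^2) - 1)
      = 1 - 1/Real.sqrt (1+C*t^2) := by
    field_simp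
    nlinarith [hs]
  rw [auxF, auxF', auxG, ← key]
  field_simp

lemma auxG_le (C D t : ℝ) (hC : 0 ≤ C) (hD : 0 ≤ D) : auxG C D t ≤ D/2 * (C * t^2) := by
  have h1 := aux_sqrt_ge_one C t hC
  have hs := aux_sqrt_pos C t hC
  have h2 : Real.sqrt (1 + C*t^2) ≤ 1 + C*t^2 := by
    nlinarith [Real.sq_sqrt (by nlinarith [sq_nonneg t] : (0:ℝ) ≤ 1 + C*t^2)]
  have h3 : 1 - 1/Real.sqrt (1+C*t^2) ≤ C*t^2 := by
    have h4 : (1:ℝ)/Real.sqrt (1+C*t^2) ≥ 2 - Real.sqrt (1+C*t^2) := by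
      rw [ge_iff_le, le_div_iff₀ hs]; nlinarith
    linarith
  rw [auxG]
  have hD2 : (0:ℝ) ≤ D/2 := by positivity
  exact mul_le_mul_of_nonneg_left h3 hD2

lemma auxG_nonneg (C D t : ℝ) (hC : 0 ≤ C) (hD : 0 ≤ D) : 0 ≤ auxG C D t := by
  have h1 := aux_sqrt_ge_one C t hC
  have hs := aux_sqrt_pos C t hC
  have h2 : 1 / Real.sqrt (1+C*t^2) ≤ 1 := by rw [div_le_one hs]; exact h1
  rw [auxG]; exact mul_nonneg (by positivity) (by linarith)

lemma auxG_lt (C D s t : ℝ) (hC : 0 < C) (hD : 0 < D) (hs : 0 ≤ s) (hst : s < t) :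
    auxG C D s < auxG C D t := by
  have h1 : Real.sqrt (1 + C*s^2) < Real.sqrt (1 + C*t^2) := by
    have hts : 0 < (t-s)*(t+s) := mul_pos (by linarith) (by linarith)
    apply Real.sqrt_lt_sqrt (by nlinarith [sq_nonneg s]) (by nlinarith)
  have h2 := aux_sqrt_pos C s hC.le
  have h3 := aux_sqrt_pos C t hC.le
  have h4 : 1 / Real.sqrt (1+C*t^2) < 1 / Real.sqrt (1+C*s^2) :=
    one_div_lt_one_div_of_lt h2 h1
  rw [auxG, auxG]
  have : (0:ℝ) < D/2 := by positivity
  nlinarith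

lemma auxG_mono (C D s t : ℝ) (hC : 0 ≤ C) (hD : 0 ≤ D) (hs : 0 ≤ s) (hst : s ≤ t) :
    auxG C D s ≤ auxG C D t := by
  have h1 : Real.sqrt (1 + C*s^2) ≤ Real.sqrt (1 + C*t^2) := by
    have hts : 0 ≤ (t-s)*(t+s) := mul_nonneg (by linarith) (by linarith)
    apply Real.sqrt_le_sqrt; nlinarith [mul_nonneg hC hts]
  have h2 := aux_sqrt_pos C s hC
  have h3 := aux_sqrt_pos C t hC
  have h4 : 1 / Real.sqrt (1+C*t^2) ≤ 1 / Real.sqrt (1+C*s^2) :=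
    one_div_le_one_div_of_le h2 h1
  rw [auxG, auxG]
  have : (0:ℝ) ≤ D/2 := by positivity
  nlinarith

lemma auxG_big (C D t : ℝ) (hC : 0 < C) (hD : 0 ≤ D) (ht : Real.sqrt (15/C) ≤ t) :
    D/2 * (3/4) ≤ auxG C D t := by
  have h15 : (0:ℝ) ≤ 15/C := by positivity
  have hts : 15/C ≤ t^2 := by
    have := Real.sqrt_nonneg (15/C)
    nlinarith [Real.sq_sqrt h15]
  have h1 : (16:ℝ) ≤ 1 + C*t^2 := by
    have : 15 ≤ C * t^2 := by
      rw [div_le_iff₀ hC] at hts; nlinarith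
    linarith
  have h2 : (4:ℝ) ≤ Real.sqrt (1 + C*t^2) := by
    have : Real.sqrt 16 ≤ Real.sqrt (1+C*t^2) := Real.sqrt_le_sqrt h1
    rwa [show (16:ℝ) = 4^2 by norm_num, Real.sqrt_sq (by norm_num : (0:ℝ) ≤ 4)] at this
  have hs := aux_sqrt_pos C t hC.le
  have h3 : 1/Real.sqrt (1+C*t^2) ≤ 1/4 := by
    rw [div_le_div_iff₀ hs (by norm_num)]; linarith
  rw [auxG]
  have hD2 : (0:ℝ) ≤ D/2 := by positivity
  nlinarith

lemma auxF'_continuous (C D : ℝ) (hC : 0 ≤ C) : Continuous (fun t => auxF' C D t) := by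
  apply Continuous.mul continuous_const
  apply Continuous.div (by continuity)
  · exact (Real.continuous_sqrt.comp (by continuity))
  · intro t; exact ne_of_gt (aux_sqrt_pos C t hC)

lemma auxF_tendsto (C D : ℝ) (hC : 0 ≤ C) :
    Filter.Tendsto (fun t => auxF C D t / t) Filter.atTop (nhds (D/2 * Real.sqrt C)) := by
  have h1 : Filter.Tendsto (fun t : ℝ => 1/t^2 + C) Filter.atTop (nhds (0 + C)) := by
    apply Filter.Tendsto.add_const
    have := (Filter.tendsto_pow_atTop (two_ne_zero)).inv_tendsto_atTop (𝕜 := ℝ)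
    simpa [one_div, Pi.inv_def] using this
  have h2 := (Real.continuous_sqrt.tendsto (0 + C)).comp h1
  rw [zero_add] at h2
  have h3 : Filter.Tendsto (fun t : ℝ => 1/t) Filter.atTop (nhds 0) := by
    simpa [one_div] using tendsto_inv_atTop_zero (𝕜 := ℝ)
  have h4 : Filter.Tendsto (fun t : ℝ => D/2 * (Real.sqrt (1/t^2 + C) - 1/t)) Filter.atTop
      (nhds (D/2 * (Real.sqrt C - 0))) := by
    exact (Filter.Tendsto.sub h2 h3).const_mul (D/2)
  rw [sub_zero] at h4
  apply h4.congr'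
  filter_upwards [Filter.eventually_gt_atTop (0:ℝ)] with t ht
  have hsq : Real.sqrt (1/t^2 + C) = Real.sqrt (1 + C*t^2) / t := by
    rw [show 1/t^2 + C = (1 + C*t^2)/t^2 by field_simp,
      Real.sqrt_div (by nlinarith [sq_nonneg t] : (0:ℝ) ≤ 1+C*t^2),
      Real.sqrt_sq ht.le]
  rw [hsq, auxF]
  field_simp

lemma auxF'_zero (C D : ℝ) : auxF' C D 0 = 0 := by simp [auxF']


/-- For `Φ(t) = 1 + Σ_j (d_j/2)(√(1+4p_j p_{-j} t²) - 1)` with total degree `Σ d_j ≥ 3`: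
the function `t ↦ Φ(t)/t` on `(0,∞)` attains a unique minimum at some `θ > 0`,
characterized by `Φ'(θ) = Φ(θ)/θ`; for `ρ := Φ(θ)/θ < λ < λ₀` the equation `λt = Φ(t)`
has exactly two positive solutions, one in `(0,θ)` and one in `(θ,∞)`, while for
`λ ≥ λ₀` it has exactly one positive solution. -/
theorem stmt6 {I : Type*} [Countable I] (neg : I → I) (hinv : ∀ j, neg (neg j) = j)
    (d : I → ℕ) (hd : ∀ j, 1 ≤ d j) (p : I → ℝ) (hp : ∀ j, 0 < p j)
    (hsum1 : HasSum (fun j => (d j : ℝ) * p j) 1)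
    (hsum2 : Summable (fun j => (d j : ℝ) * p (neg j)))
    (hdeg : 3 ≤ ∑' j, (d j : ENNReal))
    (Φ : ℝ → ℝ)
    (hΦ : ∀ t : ℝ, Φ t =
      1 + ∑' j, ((d j : ℝ) / 2) * (Real.sqrt (1 + 4 * p j * p (neg j) * t ^ 2) - 1))
    (lam0 : ℝ) (hlam0 : lam0 = ∑' j, (d j : ℝ) * Real.sqrt (p j * p (neg j))) :
    ∃ θ : ℝ, 0 < θ ∧ deriv Φ θ = Φ θ / θ ∧
      (∀ t : ℝ, 0 < t → Φ θ / θ ≤ Φ t / t) ∧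
      (∀ θ' : ℝ, 0 < θ' → (∀ t : ℝ, 0 < t → Φ θ' / θ' ≤ Φ t / t) → θ' = θ) ∧
      (∀ lam : ℝ, Φ θ / θ < lam → lam < lam0 →
        (∃! t : ℝ, t ∈ Set.Ioo 0 θ ∧ lam * t = Φ t) ∧
        (∃! t : ℝ, t ∈ Set.Ioi θ ∧ lam * t = Φ t)) ∧
      (∀ lam : ℝ, lam0 ≤ lam → ∃! t : ℝ, 0 < t ∧ lam * t = Φ t) := by
  classical
  -- notation
  set c : I → ℝ := fun j => 4 * p j * p (neg j) with hc_def
  set q : I → ℝ := fun j => Real.sqrt (p j * p (neg j)) with hq_def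
  have hc : ∀ j, (0:ℝ) < c j := fun j => by
    have h1 := hp j; have h2 := hp (neg j); rw [hc_def]; positivity
  have hq : ∀ j, (0:ℝ) < q j := fun j => by
    rw [hq_def]
    exact Real.sqrt_pos.mpr (by have := hp j; have := hp (neg j); positivity)
  have hd1 : ∀ j, (1:ℝ) ≤ (d j : ℝ) := fun j => by exact_mod_cast hd j
  have hcq : ∀ j, Real.sqrt (c j) = 2 * q j := by
    intro j
    rw [hc_def, hq_def]
    simp only
    rw [show 4 * p j * p (neg j) = 2^2 * (p j * p (neg j)) by ring,
      Real.sqrt_mul (by positivity), Real.sqrt_sq (by norm_num : (0:ℝ) ≤ 2)]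
  have hple : ∀ j, p j ≤ 1 := by
    intro j
    have h1 : (d j:ℝ) * p j ≤ 1 := le_hasSum hsum1 j (fun i _ => by
      have := hp i; positivity)
    nlinarith [hp j, hd1 j]
  -- summability facts
  have Sq : Summable (fun j => (d j:ℝ) * q j) := by
    apply Summable.of_nonneg_of_le (fun j => by have := (hq j); have := hd1 j; positivity)
      (fun j => ?_) (hsum1.summable.add hsum2)
    have hb : q j ≤ p j + p (neg j) := by
      rw [hq_def]
      simp only
      rw [Real.sqrt_le_left (by have := hp j; have := hp (neg j); positivity)]
      nlinarith [hp j, hp (neg j)]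
    have := hd1 j
    calc (d j:ℝ) * q j ≤ (d j:ℝ) * (p j + p (neg j)) := by nlinarith [hq j]
    _ = (d j:ℝ) * p j + (d j:ℝ) * p (neg j) := by ring
  have SF' : ∀ t : ℝ, Summable (fun j => auxF' (c j) (d j) t) := by
    intro t
    apply Summable.of_norm
    apply Summable.of_nonneg_of_le (fun j => norm_nonneg _) (fun j => ?_) Sq
    rw [Real.norm_eq_abs]
    have h := auxF'_bound (c j) (d j) t (hc j).le (by positivity)
    rw [hcq j] at h
    calc |auxF' (c j) (d j) t| ≤ (d j:ℝ)/2 * (2 * q j) := h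
    _ = (d j:ℝ) * q j := by ring
  have SF : ∀ t : ℝ, 0 ≤ t → Summable (fun j => auxF (c j) (d j) t) := by
    intro t ht
    apply Summable.of_nonneg_of_le
      (fun j => auxF_nonneg _ _ _ (hc j).le (by positivity))
      (fun j => ?_) (Sq.mul_right t)
    have h := auxF_le (c j) (d j) t (hc j).le (by positivity) ht
    rw [hcq j] at h
    calc auxF (c j) (d j) t ≤ (d j:ℝ)/2 * (2 * q j) * t := h
    _ = (d j:ℝ) * q j * t := by ring
  have SG : ∀ t : ℝ, Summable (fun j => auxG (c j) (d j) t) := by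
    intro t
    have Sc : Summable (fun j => (d j:ℝ)/2 * (c j * t^2)) := by
      apply Summable.of_nonneg_of_le (fun j => by
          have := (hc j).le; have := hd1 j; positivity)
        (fun j => ?_) ((hsum2.mul_left 2).mul_right (t^2))
      rw [hc_def]
      simp only
      have h1 := hp j; have h2 := hp (neg j); have h3 := hple j
      have h4 := sq_nonneg t
      have h5 := hd1 j
      nlinarith [mul_nonneg (mul_nonneg (by positivity : (0:ℝ) ≤ (d j:ℝ)) h2.le) h4]
    exact Summable.of_nonneg_of_le
      (fun j => auxG_nonneg _ _ _ (hc j).le (by positivity))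
      (fun j => auxG_le _ _ _ (hc j).le (by positivity)) Sc
  -- Φ in terms of auxF, and Φ ≥ 1
  have hΦeq : Φ = fun t => 1 + ∑' j, auxF (c j) (d j) t := by
    funext t; exact hΦ t
  have hΦ1 : ∀ t : ℝ, 0 ≤ t → 1 ≤ Φ t := by
    intro t ht
    rw [hΦeq]
    have h0 : 0 ≤ ∑' j, auxF (c j) (d j) t :=
      tsum_nonneg (fun j => auxF_nonneg _ _ _ (hc j).le (by positivity))
    simp only
    linarith
  -- derivative of Φ
  have hderivΦ : ∀ t : ℝ, HasDerivAt Φ (∑' j, auxF' (c j) (d j) t) t := by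
    intro t
    rw [hΦeq]
    have hsum0 : Summable (fun j => auxF (c j) (d j) 0) :=
      summable_zero.congr (fun j => (auxF_zero _ _).symm)
    have := hasDerivAt_tsum (g := fun j t => auxF (c j) (d j) t)
      (g' := fun j t => auxF' (c j) (d j) t) Sq
      (fun j y => auxF_hasDeriv _ _ y (hc j))
      (fun j y => ?_) hsum0 t
    · exact this.const_add 1
    · rw [Real.norm_eq_abs]
      have h := auxF'_bound (c j) (d j) y (hc j).le (by positivity)
      rw [hcq j] at h
      calc |auxF' (c j) (d j) y| ≤ (d j:ℝ)/2 * (2 * q j) := h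
      _ = (d j:ℝ) * q j := by ring
  -- continuity
  have hΦcont : Continuous Φ := by
    rw [continuous_iff_continuousAt]
    exact fun t => (hderivΦ t).differentiableAt.continuousAt
  have hΨcont : Continuous (fun t => ∑' j, auxF' (c j) (d j) t) := by
    apply continuous_tsum (fun j => auxF'_continuous _ _ (hc j).le) Sq
    intro j y
    rw [Real.norm_eq_abs]
    have h := auxF'_bound (c j) (d j) y (hc j).le (by positivity)
    rw [hcq j] at h
    calc |auxF' (c j) (d j) y| ≤ (d j:ℝ)/2 * (2 * q j) := h
    _ = (d j:ℝ) * q j := by ring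
  -- the function h t = t Φ'(t) - Φ(t)
  set H : ℝ → ℝ := fun t => t * (∑' j, auxF' (c j) (d j) t) - Φ t with hH_def
  have hHcont : Continuous H := (continuous_id.mul hΨcont).sub hΦcont
  have hHG : ∀ t : ℝ, 0 ≤ t → H t = -1 + ∑' j, auxG (c j) (d j) t := by
    intro t ht
    rw [hH_def]
    simp only
    rw [hΦeq, ← tsum_mul_left]
    have h1 : (∑' j, t * auxF' (c j) (d j) t) - (1 + ∑' j, auxF (c j) (d j) t)
        = -1 + ∑' j, (t * auxF' (c j) (d j) t - auxF (c j) (d j) t) := by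
      rw [Summable.tsum_sub ((SF' t).mul_left t) (SF t ht)]
      ring
    rw [h1]
    congr 1
    exact tsum_congr (fun j => auxG_eq _ _ _ (hc j).le)
  have hH0 : H 0 = -1 := by
    rw [hH_def]
    simp only [zero_mul, zero_sub]
    rw [hΦeq]
    simp only
    rw [show (∑' j, auxF (c j) (d j) 0) = 0 from
      (tsum_congr (fun j => auxF_zero _ _)).trans tsum_zero]
    norm_num
  -- I is nonempty
  have hne : Nonempty I := by
    by_contra hcon
    rw [not_nonempty_iff] at hcon
    rw [tsum_empty] at hdeg
    exact absurd hdeg (by norm_num)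
  obtain ⟨j₀⟩ := hne
  -- strict monotonicity of H on [0,∞)
  have hHmono : StrictMonoOn H (Set.Ici 0) := by
    intro s hs t ht hst
    rw [hHG s hs, hHG t (le_trans hs hst.le)]
    have hle : ∀ j, auxG (c j) (d j) s ≤ auxG (c j) (d j) t :=
      fun j => auxG_mono _ _ _ _ (hc j).le (by positivity) hs hst.le
    have hlt : auxG (c j₀) (d j₀) s < auxG (c j₀) (d j₀) t :=
      auxG_lt _ _ _ _ (hc j₀) (by have := hd1 j₀; positivity) hs hst
    have := Summable.tsum_lt_tsum hle hlt (SG s) (SG t)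
    linarith
  -- a finite set with total degree ≥ 3
  obtain ⟨S, hS3⟩ : ∃ S : Finset I, (3:ℝ) ≤ ∑ j ∈ S, (d j:ℝ) := by
    by_contra hcon
    push_neg at hcon
    have hnat : ∀ S : Finset I, (∑ j ∈ S, d j) ≤ 2 := by
      intro S
      have h1 := hcon S
      have h2 : ((∑ j ∈ S, d j : ℕ) : ℝ) < 3 := by
        rw [Nat.cast_sum]; exact h1
      exact_mod_cast Nat.lt_succ_iff.mp (by exact_mod_cast h2)
    have hle : ∑' j, (d j:ENNReal) ≤ 2 := by
      rw [ENNReal.tsum_eq_iSup_sum]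
      apply iSup_le
      intro S
      have h1 : (∑ j ∈ S, (d j:ENNReal)) = ((∑ j ∈ S, d j : ℕ) : ENNReal) := by
        rw [Nat.cast_sum]
      rw [h1]
      exact_mod_cast hnat S
    exact absurd (le_trans hdeg hle) (by norm_num)
  -- a point where H is positive
  obtain ⟨T, hTpos, hHT⟩ : ∃ T : ℝ, 0 < T ∧ 0 < H T := by
    refine ⟨1 + ∑ j ∈ S, Real.sqrt (15 / c j), ?_, ?_⟩
    · have : 0 ≤ ∑ j ∈ S, Real.sqrt (15 / c j) :=
        Finset.sum_nonneg (fun i _ => Real.sqrt_nonneg _)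
      linarith
    · set T := 1 + ∑ j ∈ S, Real.sqrt (15 / c j) with hT_def
      have hTpos : (0:ℝ) ≤ T := by
        rw [hT_def]
        have : 0 ≤ ∑ j ∈ S, Real.sqrt (15 / c j) :=
          Finset.sum_nonneg (fun i _ => Real.sqrt_nonneg _)
        linarith
      rw [hHG T hTpos]
      have h2 : ∑ j ∈ S, ((d j:ℝ)/2 * (3/4)) ≤ ∑ j ∈ S, auxG (c j) (d j) T := by
        apply Finset.sum_le_sum
        intro j hj
        apply auxG_big _ _ _ (hc j) (by positivity)
        have h1 : Real.sqrt (15 / c j) ≤ ∑ i ∈ S, Real.sqrt (15 / c i) :=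
          Finset.single_le_sum (f := fun i => Real.sqrt (15 / c i))
            (fun i _ => Real.sqrt_nonneg _) hj
        rw [hT_def]; linarith
      have h3 : ∑ j ∈ S, auxG (c j) (d j) T ≤ ∑' j, auxG (c j) (d j) T :=
        Summable.sum_le_tsum S (fun j _ => auxG_nonneg _ _ _ (hc j).le (by positivity)) (SG T)
      have h4 : ∑ j ∈ S, ((d j:ℝ)/2 * (3/4)) = 3/8 * ∑ j ∈ S, (d j:ℝ) := by
        rw [Finset.mul_sum]
        apply Finset.sum_congr rfl
        intro j _; ring
      rw [h4] at h2
      nlinarith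
  obtain ⟨θ, hθmem, hθH⟩ : ∃ θ ∈ Set.Ioo 0 T, H θ = 0 := by
    have hmem : (0:ℝ) ∈ Set.Ioo (H 0) (H T) := by
      rw [hH0]; exact ⟨by norm_num, hHT⟩
    have := intermediate_value_Ioo hTpos.le hHcont.continuousOn hmem
    obtain ⟨θ, hθ1, hθ2⟩ := this
    exact ⟨θ, hθ1, hθ2⟩
  have hθpos : 0 < θ := hθmem.1
  -- the function g = Φ t / t
  set g : ℝ → ℝ := fun t => Φ t / t with hg_def
  have hgdef : ∀ t, Φ t / t = g t := fun t => rfl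
  have gderiv : ∀ x : ℝ, 0 < x → HasDerivAt g (H x / x^2) x := by
    intro x hx
    have h := (hderivΦ x).div (hasDerivAt_id x) (ne_of_gt hx)
    refine h.congr_deriv ?_
    rw [hH_def]
    simp only [id_eq]
    ring
  have gcontOn : ∀ s : Set ℝ, (∀ x ∈ s, x ≠ 0) → ContinuousOn g s := by
    intro s hs x hx
    exact ((hΦcont.continuousAt).div continuousAt_id (hs x hx)).continuousWithinAt
  have gAnti : StrictAntiOn g (Set.Ioc 0 θ) := by
    apply strictAntiOn_of_deriv_neg (convex_Ioc 0 θ)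
      (gcontOn _ (fun x hx => ne_of_gt hx.1))
    intro x hx
    rw [interior_Ioc] at hx
    rw [(gderiv x hx.1).deriv]
    apply div_neg_of_neg_of_pos _ (pow_pos hx.1 2)
    have h1 : H x < H θ := hHmono (Set.mem_Ici.mpr hx.1.le)
      (Set.mem_Ici.mpr hθpos.le) hx.2
    rw [hθH] at h1
    exact h1
  have gMono : StrictMonoOn g (Set.Ici θ) := by
    apply strictMonoOn_of_deriv_pos (convex_Ici θ)
      (gcontOn _ (fun x hx => ne_of_gt (lt_of_lt_of_le hθpos hx)))
    intro x hx
    rw [interior_Ici] at hx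
    rw [(gderiv x (lt_trans hθpos hx)).deriv]
    apply div_pos _ (pow_pos (lt_trans hθpos hx) 2)
    have h1 : H θ < H x := hHmono (Set.mem_Ici.mpr hθpos.le)
      (Set.mem_Ici.mpr (lt_trans hθpos hx).le) hx
    rw [hθH] at h1
    exact h1
  have gmin : ∀ t : ℝ, 0 < t → g θ ≤ g t := by
    intro t ht
    rcases le_or_gt t θ with hle | hlt
    · exact gAnti.antitoneOn (Set.mem_Ioc.mpr ⟨ht, hle⟩)
        (Set.mem_Ioc.mpr ⟨hθpos, le_rfl⟩) hle
    · exact gMono.monotoneOn (Set.mem_Ici.mpr le_rfl)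
        (Set.mem_Ici.mpr hlt.le) hlt.le
  -- characterization of solutions
  have key : ∀ x lam : ℝ, 0 < x → (lam * x = Φ x ↔ g x = lam) := by
    intro x lam hx
    rw [← hgdef x, div_eq_iff (ne_of_gt hx)]
    exact eq_comm
  -- lower bound g t ≥ 1/t
  have glb : ∀ t : ℝ, 0 < t → 1/t ≤ g t := by
    intro t ht
    rw [← hgdef t]
    have := hΦ1 t ht.le
    gcongr
  have ρpos : 0 < g θ := lt_of_lt_of_le (by positivity) (glb θ hθpos)
  -- upper bound g t ≤ lam0 + 1/t
  have hlam0q : lam0 = ∑' j, (d j:ℝ) * q j := hlam0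
  have gub : ∀ t : ℝ, 0 < t → g t ≤ lam0 + 1/t := by
    intro t ht
    rw [← hgdef t, hΦeq]
    simp only
    have h1 : ∑' j, auxF (c j) (d j) t ≤ lam0 * t := by
      have h2 : ∀ j, auxF (c j) (d j) t ≤ (d j:ℝ) * q j * t := by
        intro j
        have h := auxF_le (c j) (d j) t (hc j).le (by positivity) ht.le
        rw [hcq j] at h
        calc auxF (c j) (d j) t ≤ (d j:ℝ)/2 * (2 * q j) * t := h
        _ = (d j:ℝ) * q j * t := by ring
      calc ∑' j, auxF (c j) (d j) t ≤ ∑' j, (d j:ℝ) * q j * t :=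
            Summable.tsum_le_tsum h2 (SF t ht.le) (Sq.mul_right t)
      _ = (∑' j, (d j:ℝ) * q j) * t := tsum_mul_right
      _ = lam0 * t := by rw [← hlam0q]
    rw [div_le_iff₀ ht]
    have h3 : (lam0 + 1/t) * t = lam0 * t + 1 := by field_simp
    rw [h3]
    linarith
  -- g < lam0 on [θ, ∞)
  have glam0 : ∀ t : ℝ, θ ≤ t → g t < lam0 := by
    intro t ht
    have h1 : g t < g (t+1) := gMono (Set.mem_Ici.mpr ht)
      (Set.mem_Ici.mpr (by linarith)) (lt_add_one t)
    have h2 : g (t+1) ≤ lam0 := by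
      by_contra hcon
      push_neg at hcon
      set ε := g (t+1) - lam0 with hε_def
      have hε : 0 < ε := by rw [hε_def]; linarith
      set s := max (t+2) (2/ε) with hs_def
      have hs1 : t + 2 ≤ s := le_max_left _ _
      have hspos : 0 < s := by
        have := hθpos; linarith
      have hs2 : g (t+1) ≤ g s := gMono.monotoneOn
        (Set.mem_Ici.mpr (by linarith)) (Set.mem_Ici.mpr (by linarith)) (by linarith)
      have hs3 := gub s hspos
      have hs4 : 1/s ≤ ε/2 := by
        have h5 : 2/ε ≤ s := le_max_right _ _
        have h6 : 0 < 2/ε := by positivity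
        calc 1/s ≤ 1/(2/ε) := one_div_le_one_div_of_le h6 h5
        _ = ε/2 := by rw [one_div_div]
      rw [hε_def] at hs4
      linarith
    linarith
  have ρlt : g θ < lam0 := glam0 θ le_rfl
  -- g exceeds any lam < lam0 for large t
  have reach : ∀ lam : ℝ, lam < lam0 → ∃ T', θ < T' ∧ lam < g T' := by
    intro lam hlam
    have hs : Filter.Tendsto (fun s : Finset I => ∑ j ∈ s, (d j:ℝ) * q j)
        Filter.atTop (nhds lam0) := by
      rw [hlam0q]
      exact Sq.hasSum
    obtain ⟨S', hS'⟩ : ∃ S' : Finset I, lam < ∑ j ∈ S', (d j:ℝ) * q j :=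
      (hs.eventually (eventually_gt_nhds hlam)).exists
    have htend : Filter.Tendsto (fun t => ∑ j ∈ S', auxF (c j) (d j) t / t)
        Filter.atTop (nhds (∑ j ∈ S', (d j:ℝ) * q j)) := by
      apply tendsto_finset_sum
      intro j _
      have h := auxF_tendsto (c j) (d j) (hc j).le
      rw [hcq j] at h
      have heq : (d j:ℝ) * q j = (d j:ℝ)/2 * (2 * q j) := by ring
      rw [heq]
      exact h
    have hev := (htend.eventually (eventually_gt_nhds hS')).and
      (Filter.eventually_gt_atTop θ)
    obtain ⟨T', hT'1, hT'2⟩ := hev.exists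
    refine ⟨T', hT'2, ?_⟩
    have hT'pos : 0 < T' := lt_trans hθpos hT'2
    have h1 : ∑ j ∈ S', auxF (c j) (d j) T' / T'
        = (∑ j ∈ S', auxF (c j) (d j) T') / T' := (Finset.sum_div _ _ _).symm
    have h2 : (∑ j ∈ S', auxF (c j) (d j) T') ≤ ∑' j, auxF (c j) (d j) T' :=
      Summable.sum_le_tsum S' (fun j _ => auxF_nonneg _ _ _ (hc j).le (by positivity))
        (SF T' hT'pos.le)
    have h3 : (∑ j ∈ S', auxF (c j) (d j) T') / T'
        ≤ (1 + ∑' j, auxF (c j) (d j) T') / T' := by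
      gcongr
      · linarith
    calc lam < ∑ j ∈ S', auxF (c j) (d j) T' / T' := hT'1
    _ = (∑ j ∈ S', auxF (c j) (d j) T') / T' := h1
    _ ≤ (1 + ∑' j, auxF (c j) (d j) T') / T' := h3
    _ = g T' := by rw [← hgdef T', hΦeq]
  -- characterization of θ: deriv Φ θ = Φ θ / θ
  have hderiv_eq : deriv Φ θ = Φ θ / θ := by
    rw [(hderivΦ θ).deriv]
    have h2 : θ * (∑' j, auxF' (c j) (d j) θ) - Φ θ = 0 := hθH
    rw [eq_div_iff (ne_of_gt hθpos)]
    linarith [h2, mul_comm θ (∑' j, auxF' (c j) (d j) θ)]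
  refine ⟨θ, hθpos, hderiv_eq, ?_, ?_, ?_, ?_⟩
  · -- minimality
    intro t ht
    rw [hgdef θ, hgdef t]
    exact gmin t ht
  · -- uniqueness of minimizer
    intro θ' hθ' hmin
    by_contra hne'
    rcases lt_or_gt_of_ne hne' with hlt | hgt
    · have h1 : g θ < g θ' := gAnti (Set.mem_Ioc.mpr ⟨hθ', hlt.le⟩)
        (Set.mem_Ioc.mpr ⟨hθpos, le_rfl⟩) hlt
      have h2 := hmin θ hθpos
      rw [hgdef θ', hgdef θ] at h2
      linarith
    · have h1 : g θ < g θ' := gMono (Set.mem_Ici.mpr le_rfl)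
        (Set.mem_Ici.mpr hgt.le) hgt
      have h2 := hmin θ hθpos
      rw [hgdef θ', hgdef θ] at h2
      linarith
  · -- two solutions for ρ < lam < lam0
    intro lam hρlam hlam0'
    rw [hgdef θ] at hρlam
    have hlampos : 0 < lam := lt_trans ρpos hρlam
    constructor
    · -- solution in (0, θ)
      have hminpos : 0 < min (1/lam) θ := lt_min (by positivity) hθpos
      set t₀ := min (1/lam) θ / 2 with ht₀_def
      have ht₀pos : 0 < t₀ := by rw [ht₀_def]; linarith
      have ht₀θ : t₀ < θ := by
        have := min_le_right (1/lam) θ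
        rw [ht₀_def]; linarith
      have hgt₀ : lam < g t₀ := by
        have h1 : t₀ ≤ 1/(2*lam) := by
          have := min_le_left (1/lam) θ
          have heq : (1/lam)/2 = 1/(2*lam) := by ring
          rw [ht₀_def]; linarith [heq]
        have h2 : 2*lam ≤ 1/t₀ := by
          have h3 := one_div_le_one_div_of_le ht₀pos h1
          rwa [show (1:ℝ)/(1/(2*lam)) = 2*lam by field_simp] at h3
        have h3 := glb t₀ ht₀pos
        linarith
      have hsub := intermediate_value_Ioo' ht₀θ.le
        (gcontOn _ (fun x hx => ne_of_gt (lt_of_lt_of_le ht₀pos hx.1)))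
      obtain ⟨x, hxmem, hgx⟩ := hsub (Set.mem_Ioo.mpr ⟨hρlam, hgt₀⟩)
      have hx0 : 0 < x := lt_trans ht₀pos hxmem.1
      refine ⟨x, ⟨Set.mem_Ioo.mpr ⟨hx0, hxmem.2⟩, (key x lam hx0).mpr hgx⟩, ?_⟩
      intro y ⟨hymem, hyeq⟩
      rw [Set.mem_Ioo] at hymem
      have hgy : g y = lam := (key y lam hymem.1).mp hyeq
      exact gAnti.injOn (Set.mem_Ioc.mpr ⟨hymem.1, hymem.2.le⟩)
        (Set.mem_Ioc.mpr ⟨hx0, hxmem.2.le⟩) (by rw [hgy, hgx])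
    · -- solution in (θ, ∞)
      obtain ⟨T', hT'θ, hT'g⟩ := reach lam hlam0'
      have hsub := intermediate_value_Ioo hT'θ.le
        (gcontOn _ (fun x hx => ne_of_gt (lt_of_lt_of_le hθpos hx.1)))
      obtain ⟨x, hxmem, hgx⟩ := hsub (Set.mem_Ioo.mpr ⟨hρlam, hT'g⟩)
      have hx0 : 0 < x := lt_trans hθpos hxmem.1
      refine ⟨x, ⟨Set.mem_Ioi.mpr hxmem.1, (key x lam hx0).mpr hgx⟩, ?_⟩
      intro y ⟨hymem, hyeq⟩
      rw [Set.mem_Ioi] at hymem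
      have hy0 : 0 < y := lt_trans hθpos hymem
      have hgy : g y = lam := (key y lam hy0).mp hyeq
      exact gMono.injOn (Set.mem_Ici.mpr hymem.le)
        (Set.mem_Ici.mpr hxmem.1.le) (by rw [hgy, hgx])
  · -- unique solution for lam ≥ lam0
    intro lam hlam
    have hρlam : g θ < lam := lt_of_lt_of_le ρlt hlam
    have hlampos : 0 < lam := lt_trans ρpos hρlam
    have hminpos : 0 < min (1/lam) θ := lt_min (by positivity) hθpos
    set t₀ := min (1/lam) θ / 2 with ht₀_def
    have ht₀pos : 0 < t₀ := by rw [ht₀_def]; linarith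
    have ht₀θ : t₀ < θ := by
      have := min_le_right (1/lam) θ
      rw [ht₀_def]; linarith
    have hgt₀ : lam < g t₀ := by
      have h1 : t₀ ≤ 1/(2*lam) := by
        have := min_le_left (1/lam) θ
        have heq : (1/lam)/2 = 1/(2*lam) := by ring
        rw [ht₀_def]; linarith [heq]
      have h2 : 2*lam ≤ 1/t₀ := by
        have h3 := one_div_le_one_div_of_le ht₀pos h1
        rwa [show (1:ℝ)/(1/(2*lam)) = 2*lam by field_simp] at h3
      have h3 := glb t₀ ht₀pos
      linarith
    have hsub := intermediate_value_Ioo' ht₀θ.le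
      (gcontOn _ (fun x hx => ne_of_gt (lt_of_lt_of_le ht₀pos hx.1)))
    obtain ⟨x, hxmem, hgx⟩ := hsub (Set.mem_Ioo.mpr ⟨hρlam, hgt₀⟩)
    have hx0 : 0 < x := lt_trans ht₀pos hxmem.1
    refine ⟨x, ⟨hx0, (key x lam hx0).mpr hgx⟩, ?_⟩
    intro y ⟨hy0, hyeq⟩
    have hgy : g y = lam := (key y lam hy0).mp hyeq
    rcases lt_trichotomy y θ with hyθ | hyθ | hyθ
    · exact gAnti.injOn (Set.mem_Ioc.mpr ⟨hy0, hyθ.le⟩)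
        (Set.mem_Ioc.mpr ⟨hx0, hxmem.2.le⟩) (by rw [hgy, hgx])
    · exfalso
      rw [hyθ] at hgy
      rw [hgy] at hρlam
      exact lt_irrefl lam hρlam
    · exfalso
      have := glam0 y hyθ.le
      rw [hgy] at this
      linarith
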